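/- Let U₂ : ℝ → ℝ satisfy X = -U₂(X) - U₂(X)^5. Then for all X ∈ ℝ, |U₂(X)| ≤ (1 + X^4)^(1/20). -/
import Mathlib


/-- If `X = -U₂ X - (U₂ X)^5` for all `X`, then
`|U₂ X| ≤ (1 + X^4)^(1/20)` for all `X`. -/
theorem stmt_4 (U₂ : ℝ → ℝ)
    (himp : ∀ X : ℝ, X = -U₂ X - (U₂ X) ^ 5) :
    ∀ X : ℝ, |U₂ X| ≤ (1 + X ^ 4) ^ ((1 : ℝ) / 20) := by
  intro X
  set u := U₂ X with hu
  have hX : X = -u - u ^ 5 := himp X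
  have hkey : |u| ^ (20 : ℕ) ≤ 1 + X ^ 4 := by
    have h1 : |u| ^ (20 : ℕ) = u ^ (20 : ℕ) := by
      rw [← abs_pow, abs_of_nonneg (by positivity)]
    rw [h1, hX]
    nlinarith [sq_nonneg (u ^ 2), sq_nonneg (u ^ 4), sq_nonneg (u ^ 6),
      sq_nonneg (u ^ 8), sq_nonneg (u ^ 10), sq_nonneg u]
  have h2 := Real.rpow_le_rpow (by positivity) hkey (by norm_num : (0:ℝ) ≤ 1 / 20)
  calc |u| = (|u| ^ (20 : ℕ)) ^ ((1:ℝ) / 20) := by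
        rw [← Real.rpow_natCast |u| 20, ← Real.rpow_mul (abs_nonneg u)]
        norm_num
    _ ≤ (1 + X ^ 4) ^ ((1:ℝ) / 20) := h2
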